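/- For every t ∈ ℕ, 2^t ≤ X(t) · t!, where X(t) is the number of equivalence classes of t×t symmetric 0–1 matrices with pairwise distinct rows under simultaneous permutation of rows and columns. -/

import Mathlib

/-- `t × t` symmetric 0–1 matrices with pairwise distinct rows. -/
def SymDistinctMat (t : ℕ) : Type :=
  {A : Matrix (Fin t) (Fin t) (Fin 2) // A.IsSymm ∧ ∀ i j : Fin t, i ≠ j → ∃ n, A i n ≠ A j n}

/-- Simultaneous permutation of rows and columns. -/
def matPermSetoid (t : ℕ) : Setoid (SymDistinctMat t) where
  r A B := ∃ σ : Equiv.Perm (Fin t), ∀ i j, B.1 i j = A.1 (σ i) (σ j)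
  iseqv := by
    refine ⟨fun A => ⟨Equiv.refl _, fun i j => rfl⟩, ?_, ?_⟩
    · rintro A B ⟨σ, h⟩
      exact ⟨σ.symm, fun i j => by rw [h]; simp⟩
    · rintro A B C ⟨σ, h⟩ ⟨τ, h'⟩
      exact ⟨τ.trans σ, fun i j => by rw [h', h]; rfl⟩

/-- `X t`: the number of `t × t` symmetric 0–1 matrices with pairwise distinct rows, up to
simultaneous permutation of rows and columns. -/
noncomputable def symDistinctCount (t : ℕ) : ℕ := Nat.card (Quotient (matPermSetoid t))

namespace SDMaux

instance instFin (t : ℕ) : Finite (SymDistinctMat t) := by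
  unfold SymDistinctMat; infer_instance

/-- The edge relation: half graph plus one special edge `{0, (t-1)/2}`. -/
def E (t a b : ℕ) : Prop :=
  t ≤ a + b ∨ (a = 0 ∧ b = (t-1)/2) ∨ (b = 0 ∧ a = (t-1)/2)

instance (t a b : ℕ) : Decidable (E t a b) := by unfold E; infer_instance

lemma E_comm (t a b : ℕ) : E t a b ↔ E t b a := by unfold E; omega

lemma keylt (t a b : ℕ) (ht : 4 ≤ t) (hb : b < t) (hab : a < b) :
    ∃ k, k < t ∧ k ≠ a ∧ k ≠ b ∧ (E t a k ↔ ¬ E t b k) := by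
  unfold E
  by_cases ha : a = 0
  · by_cases hb1 : b = t - 1
    · refine ⟨if (t-1)/2 = 1 then 2 else 1, ?_⟩
      split <;> omega
    · exact ⟨t-1, by omega⟩
  · by_cases hc : b = a+1 ∧ (t = 2*a+1 ∨ t = 2*a+2)
    · exact ⟨0, by omega⟩
    · by_cases hd : t - b = a ∨ t - b = b
      · exact ⟨t-b+1, by omega⟩
      · exact ⟨t-b, by omega⟩

lemma key (t a b : ℕ) (ht : 4 ≤ t) (ha : a < t) (hb : b < t) (hab : a ≠ b) :
    ∃ k, k < t ∧ k ≠ a ∧ k ≠ b ∧ (E t a k ↔ ¬ E t b k) := by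
  rcases lt_or_gt_of_ne hab with h | h
  · exact keylt t a b ht hb h
  · obtain ⟨k, h1, h2, h3, h4⟩ := keylt t b a ht ha h
    exact ⟨k, h1, h3, h2, iff_not_comm.mp h4⟩

/-- The matrix with diagonal `v` and off-diagonal given by the graph `E`. -/
def mat (t : ℕ) (v : Fin t → Fin 2) : Matrix (Fin t) (Fin t) (Fin 2) :=
  fun i j => if i = j then v i else if E t i.val j.val then 1 else 0

lemma mat_mem (t : ℕ) (ht : 4 ≤ t) (v : Fin t → Fin 2) :
    (mat t v).IsSymm ∧ ∀ i j : Fin t, i ≠ j → ∃ n, mat t v i n ≠ mat t v j n := by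
  constructor
  · unfold Matrix.IsSymm
    ext i j
    rw [Matrix.transpose_apply]
    unfold mat
    rcases eq_or_ne i j with h | h
    · subst h; rfl
    · rw [if_neg (Ne.symm h), if_neg h, if_congr (E_comm t j.val i.val) rfl rfl]
  · intro i j hij
    obtain ⟨k, h1, h2, h3, h4⟩ := key t i.val j.val ht i.isLt j.isLt
      (fun h => hij (Fin.ext h))
    refine ⟨⟨k, h1⟩, ?_⟩
    unfold mat
    rw [if_neg (Fin.ne_of_val_ne h2.symm), if_neg (Fin.ne_of_val_ne h3.symm)]
    by_cases hE : E t i.val k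
    · rw [if_pos hE, if_neg (h4.mp hE)]; decide
    · rw [if_neg hE, if_pos (not_not.mp (fun hn => hE (h4.mpr hn)))]; decide

lemma lower (t : ℕ) (ht : 4 ≤ t) : 2 ^ t ≤ Nat.card (SymDistinctMat t) := by
  have hinj : Function.Injective
      (fun v => (⟨mat t v, mat_mem t ht v⟩ : SymDistinctMat t)) := by
    intro v w h
    funext i
    have h2 := congrArg (fun A : SymDistinctMat t => A.1 i i) h
    simpa [mat] using h2
  have hle := Nat.card_le_card_of_injective _ hinj
  calc 2 ^ t = Nat.card (Fin t → Fin 2) := by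
        simp [Nat.card_eq_fintype_card]
    _ ≤ _ := hle

lemma upper (t : ℕ) : Nat.card (SymDistinctMat t) ≤ symDistinctCount t * Nat.factorial t := by
  classical
  have hr : ∀ A : SymDistinctMat t, ∃ σ : Equiv.Perm (Fin t), ∀ i j,
      A.1 i j = ((Quotient.mk (matPermSetoid t) A).out).1 (σ i) (σ j) :=
    fun A => Quotient.mk_out (s := matPermSetoid t) A
  let f : SymDistinctMat t → Quotient (matPermSetoid t) × Equiv.Perm (Fin t) :=
    fun A => (Quotient.mk (matPermSetoid t) A, Classical.choose (hr A))
  have hinj : Function.Injective f := by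
    intro A B h
    have h1 : Quotient.mk (matPermSetoid t) A = Quotient.mk (matPermSetoid t) B :=
      congrArg Prod.fst h
    have h2 : Classical.choose (hr A) = Classical.choose (hr B) :=
      congrArg Prod.snd h
    have sA := Classical.choose_spec (hr A)
    have sB := Classical.choose_spec (hr B)
    apply Subtype.ext
    funext i j
    calc A.1 i j = _ := sA i j
      _ = _ := by rw [h2, h1]
      _ = B.1 i j := (sB i j).symm
  have hle := Nat.card_le_card_of_injective f hinj
  rwa [Nat.card_prod, Nat.card_eq_fintype_card (α := Equiv.Perm (Fin t)),
    Fintype.card_perm, Fintype.card_fin, symDistinctCount] at *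

/-- Diagonal count, an invariant of the equivalence. -/
noncomputable def dcount (t : ℕ) (A : SymDistinctMat t) : ℕ := Nat.card {i : Fin t // A.1 i i = 1}

lemma dcount_lift (t : ℕ) : ∀ A B : SymDistinctMat t,
    (matPermSetoid t).r A B → dcount t A = dcount t B := by
  rintro A B ⟨σ, hσ⟩
  refine (Nat.card_congr (Equiv.subtypeEquiv σ fun i => ?_)).symm
  rw [hσ i i]

noncomputable def Dq (t : ℕ) : Quotient (matPermSetoid t) → ℕ :=
  Quotient.lift (dcount t) (dcount_lift t)

def idMat (t : ℕ) : SymDistinctMat t :=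
  ⟨fun i j => if i = j then 1 else 0, by
    unfold Matrix.IsSymm
    ext i j
    change ((if j = i then (1 : Fin 2) else 0 : Fin 2) : ℕ) = ((if i = j then (1 : Fin 2) else 0 : Fin 2) : ℕ)
    rcases eq_or_ne i j with h | h
    · subst h; rfl
    · rw [if_neg (Ne.symm h), if_neg h],
  fun i j hij => ⟨i, by
    show (if i = i then (1 : Fin 2) else 0) ≠ (if j = i then 1 else 0)
    rw [if_pos rfl, if_neg (Ne.symm hij)]; decide⟩⟩

def coMat (t : ℕ) : SymDistinctMat t :=
  ⟨fun i j => if i = j then 0 else 1, by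
    unfold Matrix.IsSymm
    ext i j
    change ((if j = i then (0 : Fin 2) else 1 : Fin 2) : ℕ) = ((if i = j then (0 : Fin 2) else 1 : Fin 2) : ℕ)
    rcases eq_or_ne i j with h | h
    · subst h; rfl
    · rw [if_neg (Ne.symm h), if_neg h],
  fun i j hij => ⟨i, by
    show (if i = i then (0 : Fin 2) else 1) ≠ (if j = i then 0 else 1)
    rw [if_pos rfl, if_neg (Ne.symm hij)]; decide⟩⟩

lemma dcount_idMat (t : ℕ) : dcount t (idMat t) = t := by
  unfold dcount idMat
  have h : ∀ i : Fin t, (if i = i then (1 : Fin 2) else 0) = 1 := fun i => if_pos rfl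
  rw [Nat.card_congr (Equiv.subtypeUnivEquiv h), Nat.card_eq_fintype_card, Fintype.card_fin]

lemma dcount_coMat (t : ℕ) : dcount t (coMat t) = 0 := by
  unfold dcount coMat
  have : IsEmpty {i : Fin t // (if i = i then (0 : Fin 2) else 1) = 1} := by
    refine ⟨fun ⟨i, h⟩ => ?_⟩
    rw [if_pos rfl] at h
    exact absurd h (by decide)
  exact Nat.card_of_isEmpty

lemma X_ge_two (t : ℕ) (ht : 1 ≤ t) : 2 ≤ symDistinctCount t := by
  have hne : Quotient.mk (matPermSetoid t) (idMat t) ≠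
      Quotient.mk (matPermSetoid t) (coMat t) := by
    intro h
    have h2 := congrArg (Dq t) h
    unfold Dq at h2
    rw [Quotient.lift_mk, Quotient.lift_mk, dcount_idMat, dcount_coMat] at h2
    omega
  have : Nontrivial (Quotient (matPermSetoid t)) := ⟨_, _, hne⟩
  exact Finite.one_lt_card_iff_nontrivial.mpr this

lemma X_pos (t : ℕ) : 1 ≤ symDistinctCount t := by
  have : Nonempty (Quotient (matPermSetoid t)) := ⟨Quotient.mk _ (idMat t)⟩
  exact Nat.card_pos

end SDMaux

/-- `2^t ≤ X(t) · t!`. -/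
theorem two_pow_le_symDistinctCount_mul_factorial (t : ℕ) :
    2 ^ t ≤ symDistinctCount t * Nat.factorial t := by
  rcases le_or_gt 4 t with ht | ht
  · exact le_trans (SDMaux.lower t ht) (SDMaux.upper t)
  · interval_cases t
    · simpa [Nat.factorial] using SDMaux.X_pos 0
    · simpa [Nat.factorial] using SDMaux.X_ge_two 1 (by norm_num)
    · have h := SDMaux.X_ge_two 2 (by norm_num)
      simp only [Nat.factorial]
      omega
    · have h := SDMaux.X_ge_two 3 (by norm_num)
      simp only [Nat.factorial]
      omega
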